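/- arXiv:2210.00049 — 3 statements merged into one kernel-verified Lean document; each statement's English description precedes it below -/
import Mathlib

section
/- The marginal density m₁(z | τ²) of a N(λ,1) observation with λ ∼ J(0,τ²) equals (√a/τ³)·(2π)^{−1/2}·(a + a²z²)·exp(−z²/2 + a z²/2), where a = τ²/(1+τ²). In particular m₁ is a probability density on ℝ. -/
open Real MeasureTheory

lemma integrable_sq_mul_exp_neg_mul_sq {b : ℝ} (hb : 0 < b) :
    Integrable fun x : ℝ => x ^ 2 * Real.exp (-b * x ^ 2) := by
  have h := integrable_rpow_mul_exp_neg_mul_sq hb (s := 2) (by norm_num)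
  simpa [Real.rpow_natCast] using h

lemma integral_sq_mul_exp_neg_mul_sq {b : ℝ} (hb : 0 < b) :
    ∫ x : ℝ, x ^ 2 * Real.exp (-b * x ^ 2) = Real.sqrt (π / b) / (2 * b) := by
  set f : ℝ → ℝ := fun x => x * Real.exp (-b * x ^ 2) with hf
  set f' : ℝ → ℝ := fun x => Real.exp (-b * x ^ 2) - 2 * b * (x ^ 2 * Real.exp (-b * x ^ 2)) with hf'
  have hderiv : ∀ x, HasDerivAt f (f' x) x := by
    intro x
    have h1 : HasDerivAt (fun x : ℝ => -b * x ^ 2) (-b * (2 * x)) x := by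
      simpa using ((hasDerivAt_pow 2 x).const_mul (-b))
    have h2 := h1.exp
    have h3 := (hasDerivAt_id x).mul h2
    refine h3.congr_deriv ?_
    simp [f', hf']
    ring
  have hint2 := integrable_sq_mul_exp_neg_mul_sq hb
  have hintf' : Integrable f' :=
    (integrable_exp_neg_mul_sq hb).sub (hint2.const_mul (2 * b))
  have hintf : Integrable f := integrable_mul_exp_neg_mul_sq hb
  have hz := integral_eq_zero_of_hasDerivAt_of_integrable hderiv hintf' hintf
  rw [hf'] at hz
  rw [integral_sub (integrable_exp_neg_mul_sq hb) (hint2.const_mul (2 * b)),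
    integral_const_mul, integral_gaussian] at hz
  have hb' : (2 : ℝ) * b ≠ 0 := by positivity
  field_simp at hz ⊢
  linarith

lemma integral_mul_exp_neg_mul_sq' {b : ℝ} (hb : 0 < b) :
    ∫ x : ℝ, x * Real.exp (-b * x ^ 2) = 0 := by
  have h := integral_neg_eq_self (fun x : ℝ => x * Real.exp (-b * x ^ 2)) volume
  simp only [neg_sq, neg_mul] at h
  rw [integral_neg] at h
  simp only [neg_mul]
  linarith

lemma integral_sq_mul_exp_neg_mul_sq_shift {b : ℝ} (hb : 0 < b) (c : ℝ) :
    ∫ x : ℝ, x ^ 2 * Real.exp (-b * (x - c) ^ 2)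
      = Real.sqrt (π / b) / (2 * b) + c ^ 2 * Real.sqrt (π / b) := by
  have hshift := integral_add_right_eq_self
    (μ := volume) (fun x : ℝ => x ^ 2 * Real.exp (-b * (x - c) ^ 2)) c
  rw [← hshift]
  have : ∀ x : ℝ, (x + c) ^ 2 * Real.exp (-b * (x + c - c) ^ 2)
      = x ^ 2 * Real.exp (-b * x ^ 2) + (2 * c) * (x * Real.exp (-b * x ^ 2))
        + c ^ 2 * Real.exp (-b * x ^ 2) := by
    intro x; ring_nf
  simp only [this]
  have I1 := integrable_sq_mul_exp_neg_mul_sq hb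
  have I2 : Integrable (fun x : ℝ => 2 * c * (x * Real.exp (-b * x ^ 2))) :=
    (integrable_mul_exp_neg_mul_sq hb).const_mul (2 * c)
  have I3 : Integrable (fun x : ℝ => c ^ 2 * Real.exp (-b * x ^ 2)) :=
    (integrable_exp_neg_mul_sq hb).const_mul (c ^ 2)
  have I12 : Integrable (fun x : ℝ => x ^ 2 * Real.exp (-b * x ^ 2)
      + 2 * c * (x * Real.exp (-b * x ^ 2))) := I1.add I2
  rw [integral_add I12 I3, integral_add I1 I2, integral_const_mul, integral_const_mul,
    integral_mul_exp_neg_mul_sq' hb, integral_sq_mul_exp_neg_mul_sq hb, integral_gaussian]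
  ring

theorem z_marginal_density_formula (τ : ℝ) (hτ : 0 < τ)
    (a : ℝ) (ha : a = τ^2 / (1 + τ^2))
    (m₁ : ℝ → ℝ)
    (hm₁ : ∀ z, m₁ z = ∫ l : ℝ, (Real.sqrt (2*π))⁻¹ * Real.exp (-(z - l)^2 / 2) *
        (l^2 / (Real.sqrt (2*π) * τ^3) * Real.exp (-l^2 / (2*τ^2)))) :
    (∀ z, m₁ z = (Real.sqrt a / τ^3) * (Real.sqrt (2*π))⁻¹ * (a + a^2 * z^2) *
        Real.exp (-z^2/2 + a * z^2 / 2)) ∧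
    (∫ z : ℝ, m₁ z) = 1 := by
  have hτ2 : (0:ℝ) < 1 + τ^2 := by positivity
  have ha0 : 0 < a := by rw [ha]; positivity
  have ha1 : a < 1 := by
    rw [ha, div_lt_one hτ2]; linarith
  set P := Real.sqrt (2*π) with hPdef
  have hP0 : 0 < P := Real.sqrt_pos.mpr (by positivity)
  have hP2 : P^2 = 2*π := Real.sq_sqrt (by positivity)
  set s := Real.sqrt (1 + τ^2) with hsdef
  have hs0 : 0 < s := Real.sqrt_pos.mpr hτ2
  have hs2 : s^2 = 1 + τ^2 := Real.sq_sqrt (le_of_lt hτ2)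
  have hsa : Real.sqrt a = τ / s := by
    rw [ha, ← hs2, show τ^2/s^2 = (τ/s)^2 by ring,
      Real.sqrt_sq (by positivity)]
  have hb : (0:ℝ) < 1/(2*a) := by positivity
  -- Part 1
  have part1 : ∀ z, m₁ z = (Real.sqrt a / τ^3) * P⁻¹ * (a + a^2 * z^2) *
      Real.exp (-z^2/2 + a * z^2 / 2) := by
    intro z
    have hexp : ∀ l : ℝ, -(z - l)^2/2 + (-l^2/(2*τ^2))
        = (-z^2/2 + a*z^2/2) + (-(1/(2*a)) * (l - a*z)^2) := by
      intro l
      rw [ha]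
      field_simp
      ring
    have key : ∀ l : ℝ, P⁻¹ * Real.exp (-(z - l)^2 / 2) *
        (l^2 / (P * τ^3) * Real.exp (-l^2 / (2*τ^2)))
        = ((P^2*τ^3)⁻¹ * Real.exp (-z^2/2 + a*z^2/2)) *
          (l^2 * Real.exp (-(1/(2*a)) * (l - a*z)^2)) := by
      intro l
      have h1 : Real.exp (-(z - l)^2 / 2) * Real.exp (-l^2 / (2*τ^2))
          = Real.exp (-z^2/2 + a*z^2/2) * Real.exp (-(1/(2*a)) * (l - a*z)^2) := by
        rw [← Real.exp_add, ← Real.exp_add]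
        congr 1
        have := hexp l
        linarith
      linear_combination (l^2 * (P^2*τ^3)⁻¹) * h1
    have h2 : m₁ z = ((P^2*τ^3)⁻¹ * Real.exp (-z^2/2 + a*z^2/2)) *
        ∫ l : ℝ, l^2 * Real.exp (-(1/(2*a)) * (l - a*z)^2) := by
      rw [hm₁ z, ← integral_const_mul]
      exact integral_congr_ae (Filter.Eventually.of_forall key)
    rw [h2, integral_sq_mul_exp_neg_mul_sq_shift hb (a*z)]
    have h3 : π / (1/(2*a)) = (2*π) * a := by field_simp
    have h4 : Real.sqrt (π / (1/(2*a))) = P * Real.sqrt a := by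
      rw [h3, Real.sqrt_mul (by positivity)]
    rw [h4]
    have hτ3 : τ^3 ≠ 0 := by positivity
    field_simp
  refine ⟨part1, ?_⟩
  -- Part 2
  set b' : ℝ := (1 - a)/2 with hb'def
  have hb'0 : 0 < b' := by rw [hb'def]; linarith
  set K : ℝ := Real.sqrt a / τ^3 * P⁻¹ with hKdef
  have hm : ∀ z, m₁ z = K*a * Real.exp (-b'*z^2) + K*a^2 * (z^2 * Real.exp (-b'*z^2)) := by
    intro z
    rw [part1 z, show -z^2/2 + a*z^2/2 = -b'*z^2 by rw [hb'def]; ring]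
    ring
  have I1 : Integrable (fun z : ℝ => K*a * Real.exp (-b'*z^2)) :=
    (integrable_exp_neg_mul_sq hb'0).const_mul _
  have I2 : Integrable (fun z : ℝ => K*a^2 * (z^2 * Real.exp (-b'*z^2))) :=
    (integrable_sq_mul_exp_neg_mul_sq hb'0).const_mul _
  rw [show (∫ z : ℝ, m₁ z) = ∫ z : ℝ, (K*a * Real.exp (-b'*z^2)
      + K*a^2 * (z^2 * Real.exp (-b'*z^2))) from
    integral_congr_ae (Filter.Eventually.of_forall hm)]
  rw [integral_add I1 I2, integral_const_mul, integral_const_mul,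
    integral_gaussian, integral_sq_mul_exp_neg_mul_sq hb'0]
  have h5 : π / b' = (2*π) * s^2 := by
    rw [hb'def, ha, hs2]; field_simp; ring
  have h6 : Real.sqrt (π / b') = P * s := by
    rw [h5, Real.sqrt_mul (by positivity), Real.sqrt_sq hs0.le]
  have h7 : b' = 1/(2*s^2) := by
    rw [hb'def, ha, hs2]; field_simp; ring
  rw [h6, hKdef, hsa, h7, ha, ← hs2]
  have hτ0 : τ ≠ 0 := hτ.ne'
  field_simp
  linear_combination (-1) * hs2
end

section
/- Let m₀(h) be the central chi-squared density on k degrees of freedom and let m₁(h | τ²) be the marginal density obtained by integrating the noncentral chi-squared density with k degrees of freedom and noncentrality λ against the Gamma(k/2 + 1, 1/(2τ²)) prior on λ. Then m₁(h | τ²)/m₀(h) = (τ²+1)^{−k/2−1} · (1 + τ² h/(k(τ²+1))) · exp(τ² h/(2(τ²+1))). -/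
open Real MeasureTheory

lemma tsum_exp_aux (x : ℝ) : ∑' n : ℕ, x ^ n / (Nat.factorial n) = Real.exp x := by
  rw [Real.exp_eq_exp_ℝ, NormedSpace.exp_eq_tsum_div]

lemma summable_mul_exp_aux (x : ℝ) :
    Summable (fun n : ℕ => (n : ℝ) * x ^ n / (Nat.factorial n)) := by
  rw [← summable_nat_add_iff 1]
  have : (fun n : ℕ => ((n + 1 : ℕ) : ℝ) * x ^ (n + 1) / (Nat.factorial (n + 1)))
      = fun n : ℕ => x * (x ^ n / (Nat.factorial n)) := by
    funext n
    have h1 : ((Nat.factorial (n+1) : ℝ)) = (n+1) * Nat.factorial n := by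
      push_cast [Nat.factorial_succ]; ring
    have h2 : (Nat.factorial n : ℝ) ≠ 0 := Nat.cast_ne_zero.2 (Nat.factorial_ne_zero n)
    push_cast [h1, pow_succ]
    field_simp
  rw [this]
  exact (Real.summable_pow_div_factorial x).mul_left x

lemma tsum_mul_exp_aux (x : ℝ) :
    ∑' n : ℕ, (n : ℝ) * x ^ n / (Nat.factorial n) = x * Real.exp x := by
  rw [Summable.tsum_eq_zero_add (summable_mul_exp_aux x)]
  simp only [Nat.cast_zero, zero_mul, pow_zero, Nat.factorial_zero, zero_div, zero_add]
  have : (fun n : ℕ => ((n : ℝ) + 1) * x ^ (n + 1) / (Nat.factorial (n + 1)))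
      = fun n : ℕ => x * (x ^ n / (Nat.factorial n)) := by
    funext n
    have h1 : ((Nat.factorial (n+1) : ℝ)) = (n+1) * Nat.factorial n := by
      push_cast [Nat.factorial_succ]; ring
    have h2 : (Nat.factorial n : ℝ) ≠ 0 := Nat.cast_ne_zero.2 (Nat.factorial_ne_zero n)
    rw [h1, pow_succ]
    field_simp
  push_cast
  rw [this, tsum_mul_left, tsum_exp_aux]

theorem chi_squared_bayes_factor (k : ℕ) (hk : 0 < k) (τ h : ℝ) (hτ : 0 < τ) (hh : 0 < h)
    (m₀ m₁ : ℝ)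
    (hm₀ : m₀ = 1 / (2^((k:ℝ)/2) * Real.Gamma ((k:ℝ)/2)) * h^((k:ℝ)/2 - 1) * Real.exp (-h/2))
    (hm₁ : m₁ = ∫ l in Set.Ioi (0:ℝ),
      (∑' i : ℕ, Real.exp (-l/2) * (l/2)^i / (Nat.factorial i) *
        h^((k:ℝ)/2 + i - 1) * Real.exp (-h/2) / (2^((k:ℝ)/2 + i) * Real.Gamma ((k:ℝ)/2 + i))) *
      ((1/(2*τ^2))^((k:ℝ)/2 + 1) * l^((k:ℝ)/2) * Real.exp (-(1/(2*τ^2)) * l) /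
        Real.Gamma ((k:ℝ)/2 + 1))) :
    m₁ / m₀ = (τ^2 + 1)^(-(k:ℝ)/2 - 1) * (1 + τ^2 * h / (k * (τ^2 + 1))) *
      Real.exp (τ^2 * h / (2 * (τ^2 + 1))) := by
  set a : ℝ := (k:ℝ)/2 with ha_def
  have ha : 0 < a := by positivity
  set t : ℝ := τ^2 with ht_def
  have ht : 0 < t := by positivity
  have ht1 : 0 < t + 1 := by linarith
  set β : ℝ := (t+1)/(2*t) with hβ_def
  have hβ : 0 < β := by positivity
  have hβ2 : 2 * t * β = t + 1 := by rw [hβ_def]; field_simp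
  set x : ℝ := t*h/(2*(t+1)) with hx_def
  -- coefficients
  set D : ℕ → ℝ := fun i => (1/2)^i / (Nat.factorial i) * h^(a + (i:ℝ) - 1) * Real.exp (-h/2) /
      (2^(a + (i:ℝ)) * Real.Gamma (a + (i:ℝ))) * ((1/(2*t))^(a+1) / Real.Gamma (a+1)) with hD_def
  have hD_pos : ∀ i, 0 < D i := by
    intro i
    have g1 : 0 < Real.Gamma (a + (i:ℝ)) := Real.Gamma_pos_of_pos (by positivity)
    have g2 : 0 < Real.Gamma (a + 1) := Real.Gamma_pos_of_pos (by positivity)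
    have : (0:ℝ) < (Nat.factorial i : ℝ) := by exact_mod_cast (Nat.factorial_pos i)
    have hp : (0:ℝ) < h ^ (a + (i:ℝ) - 1) := Real.rpow_pos_of_pos hh _
    have hp2 : (0:ℝ) < (2:ℝ) ^ (a + (i:ℝ)) := Real.rpow_pos_of_pos two_pos _
    have hp3 : (0:ℝ) < (1/(2*t)) ^ (a+1) := Real.rpow_pos_of_pos (by positivity) _
    rw [hD_def]
    positivity
  set G : ℕ → ℝ → ℝ := fun i l => D i * (l ^ (a + (i:ℝ)) * Real.exp (-β * l)) with hG_def
  -- Step 1: rewrite the integrand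
  have step1 : m₁ = ∫ l in Set.Ioi (0:ℝ), ∑' i : ℕ, G i l := by
    rw [hm₁]
    refine setIntegral_congr_fun measurableSet_Ioi (fun l hl => ?_)
    have hl0 : (0:ℝ) < l := hl
    rw [← tsum_mul_right]
    congr 1
    funext i
    simp only [hG_def]
    have e1 : l ^ (a + (i:ℝ)) = l ^ a * l ^ (i:ℕ) := by
      rw [Real.rpow_add hl0, Real.rpow_natCast]
    have e2 : Real.exp (-β * l) = Real.exp (-l/2) * Real.exp (-(1/(2*t)) * l) := by
      rw [← Real.exp_add]; congr 1; rw [hβ_def]; field_simp; ring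
    have g1 : Real.Gamma (a + (i:ℝ)) ≠ 0 := (Real.Gamma_pos_of_pos (by positivity)).ne'
    have g2 : Real.Gamma (a + 1) ≠ 0 := (Real.Gamma_pos_of_pos (by positivity)).ne'
    have f1 : (Nat.factorial i : ℝ) ≠ 0 := Nat.cast_ne_zero.2 (Nat.factorial_ne_zero i)
    have hp2 : ((2:ℝ)) ^ (a + (i:ℝ)) ≠ 0 := (Real.rpow_pos_of_pos two_pos _).ne'
    rw [hD_def, e1, e2]
    simp only [div_pow]
    field_simp
    ring
  -- Integrability
  have hInt : ∀ i : ℕ, Integrable (G i) (volume.restrict (Set.Ioi (0:ℝ))) := by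
    intro i
    have h1 : IntegrableOn (fun l : ℝ => l ^ (a + (i:ℝ)) * Real.exp (-β * l)) (Set.Ioi 0) := by
      have := integrableOn_rpow_mul_exp_neg_mul_rpow (p := 1) (s := a + (i:ℝ)) (b := β)
        (by have : (0:ℝ) ≤ (i:ℝ) := Nat.cast_nonneg i; linarith) zero_lt_one hβ
      simpa [Real.rpow_one] using this
    exact (h1.const_mul (D i))
  -- value of each integral
  set E : ℕ → ℝ := fun i => D i * ((1/β) ^ (a + (i:ℝ) + 1) * Real.Gamma (a + (i:ℝ) + 1))
    with hE_def
  have hval : ∀ i : ℕ, (∫ l in Set.Ioi (0:ℝ), G i l) = E i := by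
    intro i
    simp only [hG_def, hE_def]
    rw [MeasureTheory.integral_const_mul]
    congr 1
    have := Real.integral_rpow_mul_exp_neg_mul_Ioi (a := a + (i:ℝ) + 1) (r := β)
      (by positivity) hβ
    simp only [add_sub_cancel_right] at this
    rw [← this]
    refine setIntegral_congr_fun measurableSet_Ioi (fun l hl => ?_)
    rw [neg_mul]
  -- norm integrals
  have hnormval : ∀ i : ℕ, (∫ l in Set.Ioi (0:ℝ), ‖G i l‖) = E i := by
    intro i
    rw [← hval i]
    refine setIntegral_congr_fun measurableSet_Ioi (fun l hl => ?_)
    have hl0 : (0:ℝ) < l := hl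
    refine Real.norm_of_nonneg ?_
    exact mul_nonneg (hD_pos i).le
      (mul_nonneg (Real.rpow_nonneg hl0.le _) (Real.exp_pos _).le)
  -- key closed form for E
  set K : ℝ := (1 / (2^a * Real.Gamma a) * h^(a - 1) * Real.exp (-h/2)) *
      (1/(t+1))^(a+1) / a with hK_def
  have hE_eq : ∀ i : ℕ, E i = K * ((a + (i:ℝ)) * x ^ i / (Nat.factorial i)) := by
    intro i
    have gai : (0:ℝ) < Real.Gamma (a + (i:ℝ)) := Real.Gamma_pos_of_pos (by positivity)
    have ga : (0:ℝ) < Real.Gamma a := Real.Gamma_pos_of_pos ha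
    have hG1 : Real.Gamma (a + (i:ℝ) + 1) = (a + (i:ℝ)) * Real.Gamma (a + (i:ℝ)) :=
      Real.Gamma_add_one (by positivity)
    have hG2 : Real.Gamma (a + 1) = a * Real.Gamma a := Real.Gamma_add_one ha.ne'
    have hh1 : h ^ (a + (i:ℝ) - 1) = h ^ (a - 1) * h ^ i := by
      rw [show a + (i:ℝ) - 1 = (a-1) + (i:ℝ) by ring, Real.rpow_add hh, Real.rpow_natCast]
    have h2i : (2:ℝ) ^ (a + (i:ℝ)) = 2^a * 2^i := by
      rw [Real.rpow_add two_pos, Real.rpow_natCast]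
    have h1β : (1/β : ℝ) = (1/(t+1)) * (2*t) := by
      rw [hβ_def]; field_simp
    have hbi : ((1/β : ℝ)) ^ (a + (i:ℝ) + 1) =
        ((1/(t+1))^(a+1) * (2*t)^(a+1)) * (1/β) ^ i := by
      rw [show a + (i:ℝ) + 1 = (a+1) + (i:ℝ) by ring, Real.rpow_add (by positivity),
        Real.rpow_natCast, h1β, Real.mul_rpow (by positivity) (by positivity)]
    have h12t : ((1/(2*t)) : ℝ) ^ (a+1) = ((2*t) ^ (a+1 : ℝ))⁻¹ := by
      rw [one_div, Real.inv_rpow (by positivity : (0:ℝ) ≤ 2*t)]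
    have hxpow : x ^ i = t^i * h^i / (2^i * (t+1)^i) := by
      rw [hx_def, div_pow, mul_pow, mul_pow]
    have hβpow : ((1/β : ℝ))^i = 2^i * t^i / (t+1)^i := by
      rw [h1β, mul_pow, mul_pow, one_div, inv_pow]
      field_simp
    have hti : ((t+1):ℝ)^i ≠ 0 := pow_ne_zero _ ht1.ne'
    simp only [hE_def, hD_def, hK_def]
    rw [hG1, hG2, hh1, h2i, hbi, h12t, hxpow, hβpow]
    have hV : ((2*t : ℝ) ^ (a+1 : ℝ)) ≠ 0 := (Real.rpow_pos_of_pos (by positivity) _).ne'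
    have h2a : ((2:ℝ) ^ (a : ℝ)) ≠ 0 := (Real.rpow_pos_of_pos two_pos _).ne'
    have hfac : ((Nat.factorial i : ℝ)) ≠ 0 := Nat.cast_ne_zero.2 (Nat.factorial_ne_zero i)
    field_simp
    ring_nf
    rw [← mul_pow]; norm_num
  -- summability of E
  have hE_sum : Summable E := by
    refine Summable.congr ?_ (fun i => (hE_eq i).symm)
    have s1 : Summable (fun i : ℕ => K * a * (x ^ i / (Nat.factorial i))) :=
      (Real.summable_pow_div_factorial x).mul_left _
    have s2 : Summable (fun i : ℕ => K * ((i:ℝ) * x ^ i / (Nat.factorial i))) :=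
      (summable_mul_exp_aux x).mul_left _
    refine (s1.add s2).congr (fun i => ?_)
    field_simp
  -- interchange
  have step2 : m₁ = ∑' i : ℕ, E i := by
    rw [step1, ← MeasureTheory.integral_tsum_of_summable_integral_norm hInt ?_]
    · exact tsum_congr hval
    · refine Summable.congr ?_ (fun i => (hnormval i).symm)
      exact hE_sum
  -- evaluate the sum
  have step3 : m₁ = K * (a + x) * Real.exp x := by
    rw [step2]
    have e1 : ∀ i : ℕ, E i = K * a * (x ^ i / (Nat.factorial i)) +
        K * ((i:ℝ) * x ^ i / (Nat.factorial i)) := by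
      intro i; rw [hE_eq i]; field_simp
    rw [tsum_congr e1, Summable.tsum_add ((Real.summable_pow_div_factorial x).mul_left _)
      ((summable_mul_exp_aux x).mul_left _), tsum_mul_left, tsum_mul_left,
      tsum_exp_aux, tsum_mul_exp_aux]
    ring
  -- final algebra
  have hm₀pos : 0 < m₀ := by
    rw [hm₀]
    have ga : (0:ℝ) < Real.Gamma a := Real.Gamma_pos_of_pos ha
    have h2a : (0:ℝ) < (2:ℝ) ^ (a:ℝ) := Real.rpow_pos_of_pos two_pos _
    have hp : (0:ℝ) < h ^ (a - 1 : ℝ) := Real.rpow_pos_of_pos hh _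
    positivity
  have hKm : K = m₀ * (1/(t+1))^(a+1) / a := by rw [hK_def, hm₀]
  have hk2 : (k:ℝ) = 2*a := by rw [ha_def]; ring
  rw [step3, hKm]
  rw [show (-(k:ℝ)/2 - 1) = -(a+1) by rw [ha_def]; ring]
  rw [Real.rpow_neg ht1.le, ← Real.inv_rpow ht1.le, ← one_div]
  have hx1 : 1 + t * h / ((k:ℝ) * (t + 1)) = (a + x) / a := by
    rw [hk2, hx_def]; field_simp
  rw [hx1]
  field_simp
end

section
/- The marginal density of a noncentral chi-squared statistic with k degrees of freedom, whose noncentrality parameter has a Gamma(k/2+1, 1/(2τ²)) prior, equals the mixture (1/(τ²+1))·g(h; k/2, 1/(2(τ²+1))) + (τ²/(τ²+1))·g(h; k/2+1, 1/(2(τ²+1))), where g(·; α, β) is the Gamma density with shape α and rate β. -/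
open Real MeasureTheory

theorem chi_squared_marginal_mixture (k : ℕ) (hk : 0 < k) (τ h : ℝ) (hτ : 0 < τ) (hh : 0 < h)
    (g : ℝ → ℝ → ℝ → ℝ)
    (hg : ∀ α β x, g x α β = β^α * x^(α - 1) * Real.exp (-β * x) / Real.Gamma α) :
    (∫ l in Set.Ioi (0:ℝ),
      (∑' i : ℕ, Real.exp (-l/2) * (l/2)^i / (Nat.factorial i) *
        h^((k:ℝ)/2 + i - 1) * Real.exp (-h/2) / (2^((k:ℝ)/2 + i) * Real.Gamma ((k:ℝ)/2 + i))) *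
      g l ((k:ℝ)/2 + 1) (1/(2*τ^2))) =
    (1/(τ^2 + 1)) * g h ((k:ℝ)/2) (1/(2*(τ^2+1))) +
      (τ^2/(τ^2 + 1)) * g h ((k:ℝ)/2 + 1) (1/(2*(τ^2+1))) := by
  have hτ2 : (0:ℝ) < τ^2 := by positivity
  have hT : (0:ℝ) < τ^2 + 1 := by positivity
  have hkR : (0:ℝ) < k := Nat.cast_pos.mpr hk
  set r : ℝ := (k:ℝ)/2 with hrdef
  have hr : 0 < r := by rw [hrdef]; positivity
  set β : ℝ := 1/(2*τ^2) with hβdef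
  have hβ : 0 < β := by rw [hβdef]; positivity
  set s : ℝ := (τ^2+1)/(2*τ^2) with hsdef2
  have hspos : 0 < s := by rw [hsdef2]; positivity
  set y : ℝ := h*τ^2/(2*(τ^2+1)) with hydef
  set C : ℕ → ℝ := fun i => Real.exp (-h/2) * h^(r+(i:ℝ)-1) * β^(r+1) * ((2:ℝ)⁻¹)^i /
      (2^(r+(i:ℝ)) * Real.Gamma (r+(i:ℝ)) * (Nat.factorial i : ℝ) * Real.Gamma (r+1)) with hCdef
  have hri : ∀ i : ℕ, 0 < r + (i:ℝ) := fun i => by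
    have : (0:ℝ) ≤ i := Nat.cast_nonneg i
    linarith
  have hΓ : ∀ i : ℕ, 0 < Real.Gamma (r+(i:ℝ)) := fun i => Real.Gamma_pos_of_pos (hri i)
  have hΓ1 : 0 < Real.Gamma (r+1) := Real.Gamma_pos_of_pos (by linarith)
  have hΓr : 0 < Real.Gamma r := Real.Gamma_pos_of_pos hr
  have hCpos : ∀ i : ℕ, 0 < C i := fun i => by
    rw [hCdef]
    exact div_pos
      (mul_pos (mul_pos (mul_pos (Real.exp_pos _) (Real.rpow_pos_of_pos hh _))
        (Real.rpow_pos_of_pos hβ _)) (pow_pos (by norm_num) _))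
      (mul_pos (mul_pos (mul_pos (Real.rpow_pos_of_pos two_pos _) (hΓ i))
        (Nat.cast_pos.mpr i.factorial_pos)) hΓ1)
  -- Step A: pointwise rewrite of the integrand
  have hA : Set.EqOn (fun l => (∑' i : ℕ, Real.exp (-l/2) * (l/2)^i / (Nat.factorial i : ℝ) *
        h^(r + (i:ℝ) - 1) * Real.exp (-h/2) / (2^(r + (i:ℝ)) * Real.Gamma (r + (i:ℝ)))) *
      g l (r + 1) β)
      (fun l => ∑' i : ℕ, C i * (l ^ (r+(i:ℝ)) * Real.exp (-(s*l)))) (Set.Ioi 0) := by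
    intro l hl
    have hl0 : (0:ℝ) < l := hl
    simp only
    rw [hg, ← tsum_mul_right]
    refine tsum_congr fun i => ?_
    have e1 : (l/2)^i = (2:ℝ)⁻¹^i * l ^ ((i:ℝ)) := by
      rw [div_eq_mul_inv, mul_pow, ← Real.rpow_natCast l i, mul_comm]
    have e2 : l ^ (r+1-1) = l ^ r := by norm_num
    have e3 : l ^ (r + (i:ℝ)) = l ^ r * l ^ ((i:ℝ)) := Real.rpow_add hl0 _ _
    have e4 : Real.exp (-(s*l)) = Real.exp (-l/2) * Real.exp (-β*l) := by
      rw [← Real.exp_add]; congr 1; rw [hsdef2, hβdef]; field_simp; ring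
    simp only [hCdef, e1, e2, e3, e4]
    have h1 := (hΓ i).ne'
    have h2 := hΓ1.ne'
    have h3 : ((Nat.factorial i : ℝ)) ≠ 0 := (Nat.cast_pos.mpr i.factorial_pos).ne'
    have h4 : (2:ℝ)^(r+(i:ℝ)) ≠ 0 := (Real.rpow_pos_of_pos two_pos _).ne'
    field_simp
  -- integrability of each term
  have hint : ∀ i : ℕ, Integrable (fun l => C i * (l ^ (r+(i:ℝ)) * Real.exp (-(s*l))))
      (volume.restrict (Set.Ioi 0)) := by
    intro i
    apply Integrable.const_mul
    have hgt : (-1:ℝ) < r + (i:ℝ) := by linarith [hri i]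
    have := integrableOn_rpow_mul_exp_neg_mul_rpow hgt zero_lt_one hspos
    simpa [Real.rpow_one, neg_mul] using this.integrable
  -- value of each integral
  have hval : ∀ i : ℕ, (∫ l in Set.Ioi (0:ℝ), C i * (l ^ (r+(i:ℝ)) * Real.exp (-(s*l))))
      = C i * ((1/s)^(r+(i:ℝ)+1) * Real.Gamma (r+(i:ℝ)+1)) := by
    intro i
    rw [MeasureTheory.integral_const_mul]
    congr 1
    have hpos : (0:ℝ) < r + (i:ℝ) + 1 := by linarith [hri i]
    have := integral_rpow_mul_exp_neg_mul_Ioi hpos hspos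
    simpa using this
  -- norm integrals coincide with the integrals
  have hnormval : ∀ i : ℕ, (∫ l in Set.Ioi (0:ℝ), ‖C i * (l ^ (r+(i:ℝ)) * Real.exp (-(s*l)))‖)
      = C i * ((1/s)^(r+(i:ℝ)+1) * Real.Gamma (r+(i:ℝ)+1)) := by
    intro i
    have heq : Set.EqOn (fun l : ℝ => ‖C i * (l ^ (r+(i:ℝ)) * Real.exp (-(s*l)))‖)
        (fun l => C i * (l ^ (r+(i:ℝ)) * Real.exp (-(s*l)))) (Set.Ioi 0) := by
      intro l hl
      have hl0 : (0:ℝ) < l := hl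
      exact Real.norm_of_nonneg (mul_nonneg (hCpos i).le
        (mul_nonneg (Real.rpow_pos_of_pos hl0 _).le (Real.exp_nonneg _)))
    rw [MeasureTheory.setIntegral_congr_fun measurableSet_Ioi heq, hval i]
  -- closed form of each summand
  set K : ℝ := Real.exp (-h/2) * h^(r-1) * β^(r+1) * (1/s)^(r+1) / (2^r * Real.Gamma (r+1))
    with hKdef
  have hterm : ∀ i : ℕ, C i * ((1/s)^(r+(i:ℝ)+1) * Real.Gamma (r+(i:ℝ)+1))
      = K * ((r+(i:ℝ)) * y^i / (Nat.factorial i : ℝ)) := by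
    intro i
    have g1 : Real.Gamma (r+(i:ℝ)+1) = (r+(i:ℝ)) * Real.Gamma (r+(i:ℝ)) :=
      Real.Gamma_add_one (hri i).ne'
    have p1 : h^(r+(i:ℝ)-1) = h^(r-1) * h^i := by
      rw [show r+(i:ℝ)-1 = (r-1)+(i:ℝ) by ring, Real.rpow_add hh, Real.rpow_natCast]
    have p2 : (2:ℝ)^(r+(i:ℝ)) = 2^r * 2^i := by
      rw [Real.rpow_add two_pos, Real.rpow_natCast]
    have p3 : (1/s)^(r+(i:ℝ)+1) = (1/s)^(r+1) * (1/s)^i := by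
      rw [show r+(i:ℝ)+1 = (r+1)+(i:ℝ) by ring, Real.rpow_add (by positivity), Real.rpow_natCast]
    have hy : y ^ i = h^i * (2:ℝ)⁻¹^i * (2:ℝ)⁻¹^i * (1/s)^i := by
      rw [← mul_pow, ← mul_pow, ← mul_pow]
      congr 1
      rw [hydef, hsdef2]; field_simp
    simp only [hCdef, hKdef, g1, p1, p2, p3, hy]
    have h1 := (hΓ i).ne'
    have h2 := hΓ1.ne'
    have h3 : ((Nat.factorial i : ℝ)) ≠ 0 := (Nat.cast_pos.mpr i.factorial_pos).ne'
    have h4 : (2:ℝ)^r ≠ 0 := (Real.rpow_pos_of_pos two_pos _).ne'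
    field_simp
    rw [← mul_pow]; norm_num
  -- summability facts
  have hsum1 : Summable (fun i : ℕ => r * (y^i / (Nat.factorial i : ℝ))) :=
    (Real.summable_pow_div_factorial y).mul_left r
  have hsum2 : Summable (fun i : ℕ => (i:ℝ) * y^i / (Nat.factorial i : ℝ)) := by
    rw [← summable_nat_add_iff 1]
    refine ((Real.summable_pow_div_factorial y).mul_left y).congr fun i => ?_
    have h3 : ((Nat.factorial i : ℝ)) ≠ 0 := (Nat.cast_pos.mpr i.factorial_pos).ne'
    rw [Nat.factorial_succ]
    push_cast
    rw [pow_succ]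
    field_simp
  have hsum3 : Summable (fun i : ℕ => (r + (i:ℝ)) * y^i / (Nat.factorial i : ℝ)) := by
    refine (hsum1.add hsum2).congr fun i => ?_
    show r * (y^i / (Nat.factorial i : ℝ)) + (i:ℝ) * y^i / (Nat.factorial i : ℝ) = _
    ring
  have hexp : ∀ x : ℝ, ∑' i : ℕ, x^i / (Nat.factorial i : ℝ) = Real.exp x := fun x => by
    rw [Real.exp_eq_exp_ℝ, NormedSpace.exp_eq_tsum_div]
  have htsum2 : ∑' i : ℕ, (i:ℝ) * y^i / (Nat.factorial i : ℝ) = y * Real.exp y := by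
    rw [hsum2.tsum_eq_zero_add]
    simp only [Nat.cast_zero, zero_mul, zero_div, zero_add]
    have : (fun i : ℕ => ((i:ℝ)+1) * y^(i+1) / ((Nat.factorial (i+1) : ℝ)))
        = fun i : ℕ => y * (y^i / (Nat.factorial i : ℝ)) := by
      funext i
      have h3 : ((Nat.factorial i : ℝ)) ≠ 0 := (Nat.cast_pos.mpr i.factorial_pos).ne'
      rw [Nat.factorial_succ]
      push_cast
      rw [pow_succ]
      field_simp
    simp only [Nat.cast_add, Nat.cast_one] at this ⊢
    rw [this, tsum_mul_left, hexp]
  have hkey : ∑' i : ℕ, (r+(i:ℝ)) * y^i / (Nat.factorial i : ℝ) = (r + y) * Real.exp y := by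
    calc ∑' i : ℕ, (r+(i:ℝ)) * y^i / (Nat.factorial i : ℝ)
        = ∑' i : ℕ, (r * (y^i / (Nat.factorial i : ℝ)) + (i:ℝ) * y^i / (Nat.factorial i : ℝ)) :=
          tsum_congr fun i => by ring
      _ = r * Real.exp y + y * Real.exp y := by
          rw [hsum1.tsum_add hsum2, tsum_mul_left, hexp, htsum2]
      _ = (r + y) * Real.exp y := by ring
  have hFsum : Summable
      (fun i : ℕ => ∫ l in Set.Ioi (0:ℝ), ‖C i * (l ^ (r+(i:ℝ)) * Real.exp (-(s*l)))‖) :=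
    (hsum3.mul_left K).congr fun i => ((hnormval i).trans (hterm i)).symm
  rw [MeasureTheory.setIntegral_congr_fun measurableSet_Ioi hA,
      ← MeasureTheory.integral_tsum_of_summable_integral_norm hint hFsum]
  calc ∑' i : ℕ, ∫ l in Set.Ioi (0:ℝ), C i * (l ^ (r+(i:ℝ)) * Real.exp (-(s*l)))
      = ∑' i : ℕ, K * ((r+(i:ℝ)) * y^i / (Nat.factorial i : ℝ)) :=
        tsum_congr fun i => (hval i).trans (hterm i)
    _ = K * ((r + y) * Real.exp y) := by rw [tsum_mul_left, hkey]
    _ = (1/(τ^2 + 1)) * g h r (1/(2*(τ^2+1))) + (τ^2/(τ^2 + 1)) * g h (r+1) (1/(2*(τ^2+1))) := by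
        rw [hg, hg, hKdef]
        have q1 : Real.Gamma (r+1) = r * Real.Gamma r := Real.Gamma_add_one hr.ne'
        have q2 : h ^ (r+1-1) = h^(r-1) * h := by
          rw [show r+1-1 = (r-1)+1 by ring, Real.rpow_add_one hh.ne']
        have q3 : Real.exp (-(1/(2*(τ^2+1))) * h) = Real.exp (-h/2) * Real.exp y := by
          rw [← Real.exp_add]; congr 1; rw [hydef]; field_simp; ring
        have q4 : ((1/s):ℝ)^(r+1) = (β^(r+1))⁻¹ * ((1/(τ^2+1)):ℝ)^(r+1) := by
          rw [show (1/s : ℝ) = β⁻¹ * (1/(τ^2+1)) by rw [hβdef, hsdef2]; field_simp,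
            Real.mul_rpow (by positivity) (by positivity), Real.inv_rpow hβ.le]
        have q5 : ((1/(τ^2+1)) : ℝ)^(r+1) = (1/(τ^2+1))^r * (1/(τ^2+1)) :=
          Real.rpow_add_one (by positivity) r
        have q6 : ((1/(2*(τ^2+1))) : ℝ)^r = ((2:ℝ)^r)⁻¹ * (1/(τ^2+1))^r := by
          rw [show (1/(2*(τ^2+1)) : ℝ) = (1/2) * (1/(τ^2+1)) by field_simp,
            Real.mul_rpow (by norm_num) (by positivity), one_div,
            Real.inv_rpow (by norm_num : (0:ℝ) ≤ 2)]
        have q7 : ((1/(2*(τ^2+1))) : ℝ)^(r+1) = ((2:ℝ)^r)⁻¹ * (1/(τ^2+1))^r * (1/(2*(τ^2+1))) := by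
          rw [Real.rpow_add_one (by positivity) r, q6]
        rw [q1, q2, q3, q4, q5, q6, q7, hydef]
        have h4 : (2:ℝ)^r ≠ 0 := (Real.rpow_pos_of_pos two_pos _).ne'
        have h5 : Real.Gamma r ≠ 0 := hΓr.ne'
        have h6 : β^(r+1) ≠ 0 := (Real.rpow_pos_of_pos hβ _).ne'
        field_simp
end
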